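/- Let m ≥ 1 be an integer and P : ℝ → ℝ a polynomial of degree at most 2m−1. Then for every nonnegative integer n, G_{m,P}(n) = G^EM_{m,P}(n); that is, ∑_{j=1}^{m} γ_{m,j} ∑_{i=0}^{j−1} P(n−1+j/2−i) = P(n−1) + P′(n−1)/2 + ∑_{j=1}^{m−1} (B_{2j}/(2j)!) · P^{(2j)}(n−1). -/
import Mathlib

/-- The coefficients `γ_{m,j} := (−1)^{j−1} · (2/j) · C(2m, m+j) / C(2m, m)`. -/
noncomputable def altGamma (m j : ℕ) : ℝ :=
  (-1 : ℝ) ^ (j - 1) * (2 / (j : ℝ)) * ((2 * m).choose (m + j) : ℝ) / ((2 * m).choose m : ℝ)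


/-- Alternating binomial sums annihilate low-degree power functions. -/
lemma fd_zero : ∀ n : ℕ, ∀ d : ℕ, d < n → ∀ c : ℝ,
    ∑ r ∈ Finset.range (n + 1), (-1 : ℝ) ^ r * (n.choose r : ℝ) * ((r : ℝ) - c) ^ d = 0 := by
  intro n
  induction n with
  | zero => intro d hd; omega
  | succ n ih =>
    intro d hd c
    have key : ∑ r ∈ Finset.range (n + 2), (-1:ℝ)^r * ((n+1).choose r : ℝ) * ((r:ℝ) - c)^d
        = ∑ r ∈ Finset.range (n + 1), (-1:ℝ)^r * (n.choose r : ℝ) *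
            (((r:ℝ) - c)^d - (((r:ℝ)+1) - c)^d) := by
      have hsplit : ∑ r ∈ Finset.range (n + 1), (-1:ℝ)^r * (n.choose r : ℝ) *
            (((r:ℝ) - c)^d - (((r:ℝ)+1) - c)^d)
          = (∑ r ∈ Finset.range (n + 1), (-1:ℝ)^r * (n.choose r : ℝ) * ((r:ℝ) - c)^d)
            - ∑ r ∈ Finset.range (n + 1), (-1:ℝ)^r * (n.choose r : ℝ) * (((r:ℝ)+1) - c)^d := by
        rw [← Finset.sum_sub_distrib]; apply Finset.sum_congr rfl; intro r _; ring
      rw [hsplit]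
      rw [Finset.sum_range_succ' (fun r => (-1:ℝ)^r * ((n+1).choose r : ℝ) * ((r:ℝ) - c)^d)]
      have hPascal : ∀ i ∈ Finset.range (n+1),
          (-1:ℝ)^(i+1) * ((n+1).choose (i+1) : ℝ) * (((i+1:ℕ):ℝ) - c)^d
          = (-1:ℝ)^(i+1) * ((n.choose (i+1) : ℝ)) * (((i:ℝ)+1) - c)^d
            - (-1:ℝ)^i * (n.choose i : ℝ) * (((i:ℝ)+1) - c)^d := by
        intro i _
        rw [Nat.choose_succ_succ]
        push_cast
        ring
      rw [Finset.sum_congr rfl hPascal, Finset.sum_sub_distrib]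
      have hback : (∑ i ∈ Finset.range (n+1), (-1:ℝ)^(i+1) * (n.choose (i+1) : ℝ) * (((i:ℝ)+1) - c)^d)
            + (-1:ℝ)^0 * ((n+1).choose 0 : ℝ) * (((0:ℕ):ℝ) - c)^d
          = ∑ r ∈ Finset.range (n + 1), (-1:ℝ)^r * (n.choose r : ℝ) * ((r:ℝ) - c)^d := by
        have h2 := Finset.sum_range_succ' (fun r => (-1:ℝ)^r * (n.choose r : ℝ) * ((r:ℝ) - c)^d) (n+1)
        rw [Finset.sum_range_succ (fun r => (-1:ℝ)^r * (n.choose r : ℝ) * ((r:ℝ) - c)^d) (n+1)] at h2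
        have htop : (-1:ℝ)^(n+1) * (n.choose (n+1) : ℝ) * (((n+1:ℕ):ℝ) - c)^d = 0 := by
          simp [Nat.choose_succ_self]
        push_cast at h2 htop ⊢
        simp only [Nat.choose_zero_right, Nat.cast_one, pow_zero, one_mul] at h2 ⊢
        linarith [h2]
      push_cast at hback ⊢
      linarith [hback]
    rw [key]
    have hbrk : ∀ r ∈ Finset.range (n+1),
        (-1:ℝ)^r * (n.choose r : ℝ) * (((r:ℝ) - c)^d - (((r:ℝ)+1) - c)^d)
        = ∑ t ∈ Finset.range d, -((d.choose t : ℝ) *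
            ((-1:ℝ)^r * (n.choose r : ℝ) * ((r:ℝ) - c)^t)) := by
      intro r _
      have hexp : (((r:ℝ) - c) + 1)^d = ∑ t ∈ Finset.range (d+1), ((r:ℝ) - c)^t * (d.choose t : ℝ) := by
        rw [add_pow]
        apply Finset.sum_congr rfl; intro t _; ring
      have heq : ((r:ℝ)+1) - c = ((r:ℝ) - c) + 1 := by ring
      rw [heq, hexp, Finset.sum_range_succ, Nat.choose_self]
      have hr : ∑ t ∈ Finset.range d, -((d.choose t : ℝ) *
            ((-1:ℝ)^r * (n.choose r : ℝ) * ((r:ℝ) - c)^t))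
          = -((-1:ℝ)^r * (n.choose r : ℝ) *
              ∑ t ∈ Finset.range d, ((r:ℝ) - c)^t * (d.choose t : ℝ)) := by
        rw [Finset.mul_sum, ← Finset.sum_neg_distrib]
        apply Finset.sum_congr rfl; intro t _; ring
      rw [hr]
      push_cast
      ring
    rw [Finset.sum_congr rfl hbrk, Finset.sum_comm]
    have hz : ∀ t ∈ Finset.range d, ∑ r ∈ Finset.range (n+1),
        -((d.choose t : ℝ) * ((-1:ℝ)^r * (n.choose r : ℝ) * ((r:ℝ) - c)^t)) = 0 := by
      intro t ht
      simp only [Finset.mem_range] at ht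
      rw [Finset.sum_neg_distrib, ← Finset.mul_sum, ih t (by omega) c, mul_zero, neg_zero]
    rw [Finset.sum_congr rfl hz, Finset.sum_const_zero]

lemma Tlem (m d : ℕ) (hm : 1 ≤ m) (hd : d < 2*m) (hde : Even d) :
    ∑ j ∈ Finset.Icc 1 m, (-1:ℝ)^(j-1) * ((2*m).choose (m+j) : ℝ) * (j:ℝ)^d
      = ((2*m).choose m : ℝ) * (0:ℝ)^d / 2 := by
  set f : ℕ → ℝ := fun r => (-1:ℝ)^r * ((2*m).choose r : ℝ) * ((r:ℝ) - (m:ℝ))^d with hf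
  have h0 : ∑ r ∈ Finset.range (2*m + 1), f r = 0 := fd_zero (2*m) d hd (m:ℝ)
  -- split the sum
  have hsplit : ∑ r ∈ Finset.range (2*m + 1), f r
      = (∑ i ∈ Finset.range m, f i) + f m + ∑ i ∈ Finset.range m, f (m + 1 + i) := by
    have e2 : ∑ k ∈ Finset.Ico (m+1) (2*m+1), f k = ∑ i ∈ Finset.range m, f (m+1+i) := by
      rw [Finset.sum_Ico_eq_sum_range]
      have h3 : 2*m + 1 - (m+1) = m := by omega
      rw [h3]
    rw [Finset.range_eq_Ico, ← Finset.sum_Ico_consecutive f (Nat.zero_le m) (by omega : m ≤ 2*m+1)]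
    rw [Finset.sum_eq_sum_Ico_succ_bot (by omega : m < 2*m+1) f]
    rw [e2, Nat.Ico_zero_eq_range]
    ring
  -- reflection: the lower part equals the upper part
  have hrefl : ∑ i ∈ Finset.range m, f i = ∑ i ∈ Finset.range m, f (m + 1 + i) := by
    rw [← Finset.sum_range_reflect f m]
    apply Finset.sum_congr rfl
    intro i hi
    simp only [Finset.mem_range] at hi
    have hi1 : i + 1 ≤ m := hi
    simp only [hf]
    have hsign : (-1:ℝ)^(m+1+i) = (-1:ℝ)^(m-1-i) := by
      have h1 : m+1+i = (m-1-i) + (2+2*i) := by omega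
      have hev : (-1:ℝ)^(2+2*i) = 1 := Even.neg_one_pow ⟨1+i, by ring⟩
      rw [h1, pow_add, hev, mul_one]
    have hchoose : (2*m).choose (m-1-i) = (2*m).choose (m+1+i) := by
      rw [← Nat.choose_symm (by omega : m+1+i ≤ 2*m)]
      congr 1
      omega
    have hcast1 : ((m-1-i : ℕ) : ℝ) - (m:ℝ) = -((i:ℝ)+1) := by
      have : ((m-1-i : ℕ) : ℝ) = (m:ℝ) - 1 - (i:ℝ) := by
        have h2 : (m : ℕ) - 1 - i = m - (1+i) := by omega
        rw [h2, Nat.cast_sub (by omega : 1+i ≤ m)]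
        push_cast; ring
      rw [this]; ring
    have hcast2 : ((m+1+i : ℕ) : ℝ) - (m:ℝ) = (i:ℝ)+1 := by push_cast; ring
    rw [hcast1, hcast2, hsign, hchoose, Even.neg_pow hde]
  -- express the upper part via the target sum
  have hT : ∑ i ∈ Finset.range m, f (m + 1 + i)
      = (-1:ℝ)^(m+1) * ∑ j ∈ Finset.Icc 1 m, (-1:ℝ)^(j-1) * ((2*m).choose (m+j) : ℝ) * (j:ℝ)^d := by
    rw [show Finset.Icc 1 m = Finset.Ico 1 (m+1) from (Finset.Ico_add_one_right_eq_Icc 1 m).symm,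
      Finset.sum_Ico_eq_sum_range]
    have : m + 1 - 1 = m := by omega
    rw [this, Finset.mul_sum]
    apply Finset.sum_congr rfl
    intro i hi
    simp only [hf]
    have h1 : 1 + i - 1 = i := by omega
    have h2 : m + (1+i) = m+1+i := by omega
    rw [h1, h2]
    have hcast2 : ((m+1+i : ℕ) : ℝ) - (m:ℝ) = ((1+i:ℕ):ℝ) := by push_cast; ring
    rw [hcast2]
    have hsign : (-1:ℝ)^(m+1+i) = (-1:ℝ)^(m+1) * (-1:ℝ)^i := by rw [pow_add]
    rw [hsign]
    ring
  rw [hsplit, hrefl, hT] at h0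
  have hfm : f m = (-1:ℝ)^m * ((2*m).choose m : ℝ) * (0:ℝ)^d := by
    simp only [hf, sub_self]
  rw [hfm] at h0
  have hs : (-1:ℝ)^(m+1) = -(-1:ℝ)^m := by rw [pow_succ]; ring
  rw [hs] at h0
  rcases neg_one_pow_eq_or ℝ m with h1 | h1 <;> rw [h1] at h0 <;> linarith


noncomputable def altA (m k : ℕ) : ℝ :=
  ∑ j ∈ Finset.Icc 1 m, altGamma m j * ∑ i ∈ Finset.range j, ((j:ℝ)/2 - (i:ℝ))^k

lemma claim1' (m : ℕ) (hm : 1 ≤ m) (k : ℕ) (hk : k ≤ 2*m) :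
    ∑ j ∈ Finset.Icc 1 m, altGamma m j * (((j:ℝ)/2)^k - (-((j:ℝ)/2))^k)
      = if k = 1 then 1 else 0 := by
  have hC0 : (((2*m).choose m : ℕ) : ℝ) ≠ 0 := by
    exact_mod_cast (Nat.choose_pos (by omega : m ≤ 2*m)).ne'
  rcases Nat.even_or_odd k with hke | hko
  · have : ∀ j ∈ Finset.Icc 1 m, altGamma m j * (((j:ℝ)/2)^k - (-((j:ℝ)/2))^k) = 0 := by
      intro j _
      rw [Even.neg_pow hke, sub_self, mul_zero]
    rw [Finset.sum_congr rfl this, Finset.sum_const_zero]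
    rw [if_neg (by rintro rfl; exact (Nat.not_even_iff_odd.2 odd_one) hke)]
  · have hk1 : 1 ≤ k := hko.pos
    have hpt : ∀ j ∈ Finset.Icc 1 m, altGamma m j * (((j:ℝ)/2)^k - (-((j:ℝ)/2))^k)
        = (4/(2^k * (((2*m).choose m : ℕ) : ℝ))) *
          ((-1:ℝ)^(j-1) * ((2*m).choose (m+j) : ℝ) * (j:ℝ)^(k-1)) := by
      intro j hj
      simp only [Finset.mem_Icc] at hj
      have hj0 : (j:ℝ) ≠ 0 := by exact_mod_cast (by omega : j ≠ 0)
      have hpow : ((j:ℝ))^k = (j:ℝ)^(k-1) * (j:ℝ) := by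
        conv_lhs => rw [show k = (k-1)+1 by omega]
        rw [pow_succ]
      rw [Odd.neg_pow hko, altGamma, div_pow, sub_neg_eq_add, ← two_mul, hpow]
      field_simp
      ring
    rw [Finset.sum_congr rfl hpt, ← Finset.mul_sum,
      Tlem m (k-1) hm (by omega) (Nat.Odd.sub_odd hko odd_one)]
    rcases eq_or_ne k 1 with rfl | hk1'
    · rw [if_pos rfl]
      simp only [Nat.sub_self, pow_zero, pow_one]
      field_simp
      ring
    · rw [if_neg hk1']
      rw [zero_pow (by omega : k - 1 ≠ 0)]
      ring

lemma hone (K : ℕ) (x : ℝ) :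
    ∑ k ∈ Finset.range K, (K.choose k : ℝ) * x^k = (x+1)^K - x^K := by
  rw [add_pow, Finset.sum_range_succ, Nat.choose_self]
  push_cast
  rw [show ∑ k ∈ Finset.range K, x ^ k * 1 ^ (K - k) * (K.choose k : ℝ)
      = ∑ k ∈ Finset.range K, (K.choose k : ℝ) * x^k from
    Finset.sum_congr rfl (fun k _ => by rw [one_pow]; ring)]
  ring

lemma recA (m : ℕ) (hm : 1 ≤ m) (K : ℕ) (hK1 : 1 ≤ K) (hK2 : K ≤ 2*m) :
    ∑ k ∈ Finset.range K, (K.choose k : ℝ) * altA m k = K := by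
  simp only [altA]
  have step1 : ∑ k ∈ Finset.range K, (K.choose k : ℝ) *
        (∑ j ∈ Finset.Icc 1 m, altGamma m j * ∑ i ∈ Finset.range j, ((j:ℝ)/2 - (i:ℝ))^k)
      = ∑ j ∈ Finset.Icc 1 m, altGamma m j *
          (((j:ℝ)/2+1)^K - ((j:ℝ)/2 - (j:ℝ) + 1)^K) := by
    have h1 : ∀ k ∈ Finset.range K, (K.choose k:ℝ) *
          (∑ j ∈ Finset.Icc 1 m, altGamma m j * ∑ i ∈ Finset.range j, ((j:ℝ)/2 - (i:ℝ))^k)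
        = ∑ j ∈ Finset.Icc 1 m, altGamma m j *
            ((K.choose k:ℝ) * ∑ i ∈ Finset.range j, ((j:ℝ)/2 - (i:ℝ))^k) := by
      intro k _
      rw [Finset.mul_sum]
      exact Finset.sum_congr rfl fun j _ => by ring
    rw [Finset.sum_congr rfl h1, Finset.sum_comm]
    apply Finset.sum_congr rfl
    intro j _
    rw [← Finset.mul_sum]
    congr 1
    have h2 : ∀ k ∈ Finset.range K, (K.choose k:ℝ) * ∑ i ∈ Finset.range j, ((j:ℝ)/2 - (i:ℝ))^k
        = ∑ i ∈ Finset.range j, (K.choose k:ℝ) * ((j:ℝ)/2 - (i:ℝ))^k :=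
      fun k _ => Finset.mul_sum _ _ _
    rw [Finset.sum_congr rfl h2, Finset.sum_comm]
    have h3 : ∀ i ∈ Finset.range j, ∑ k ∈ Finset.range K, (K.choose k:ℝ) * ((j:ℝ)/2 - (i:ℝ))^k
        = ((j:ℝ)/2 - (i:ℝ) + 1)^K - ((j:ℝ)/2 - (i:ℝ))^K := fun i _ => hone K _
    rw [Finset.sum_congr rfl h3]
    have h4 : ∀ i ∈ Finset.range j, ((j:ℝ)/2 - (i:ℝ) + 1)^K - ((j:ℝ)/2 - (i:ℝ))^K
        = (fun i : ℕ => ((j:ℝ)/2 - (i:ℝ) + 1)^K) i - (fun i : ℕ => ((j:ℝ)/2 - (i:ℝ) + 1)^K) (i+1) := by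
      intro i _
      simp only
      have : (j:ℝ)/2 - ((i:ℕ)+1 : ℕ) + 1 = (j:ℝ)/2 - (i:ℝ) := by push_cast; ring
      rw [this]
    rw [Finset.sum_congr rfl h4, Finset.sum_range_sub']
    simp only [Nat.cast_zero]
    norm_num
  rw [step1]
  have step2 : ∀ j ∈ Finset.Icc 1 m, altGamma m j *
        (((j:ℝ)/2+1)^K - ((j:ℝ)/2 - (j:ℝ) + 1)^K)
      = ∑ k ∈ Finset.range (K+1), (K.choose k:ℝ) *
          (altGamma m j * (((j:ℝ)/2)^k - (-((j:ℝ)/2))^k)) := by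
    intro j _
    have e1 : ((j:ℝ)/2+1)^K = ∑ k ∈ Finset.range (K+1), ((j:ℝ)/2)^k * 1^(K-k) * (K.choose k : ℝ) := by
      rw [add_pow]
    have e2 : ((j:ℝ)/2 - (j:ℝ) + 1)^K
        = ∑ k ∈ Finset.range (K+1), (-((j:ℝ)/2))^k * 1^(K-k) * (K.choose k : ℝ) := by
      rw [show (j:ℝ)/2 - (j:ℝ) + 1 = -((j:ℝ)/2) + 1 from by ring, add_pow]
    rw [e1, e2, ← Finset.sum_sub_distrib, Finset.mul_sum]
    apply Finset.sum_congr rfl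
    intro k _
    rw [one_pow]
    ring
  rw [Finset.sum_congr rfl step2, Finset.sum_comm]
  have h5 : ∀ k ∈ Finset.range (K+1),
      ∑ j ∈ Finset.Icc 1 m, (K.choose k:ℝ) * (altGamma m j * (((j:ℝ)/2)^k - (-((j:ℝ)/2))^k))
      = (K.choose k : ℝ) * (if k = 1 then 1 else 0) := by
    intro k hk
    simp only [Finset.mem_range] at hk
    rw [← Finset.mul_sum, claim1' m hm k (by omega)]
  rw [Finset.sum_congr rfl h5]
  rw [Finset.sum_eq_single_of_mem 1 (Finset.mem_range.2 (by omega))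
    (fun k _ hk1 => by rw [if_neg hk1, mul_zero])]
  rw [if_pos rfl, Nat.choose_one_right, mul_one]

lemma starA (m : ℕ) (hm : 1 ≤ m) : ∀ k, k < 2*m → altA m k = ((bernoulli' k : ℚ) : ℝ) := by
  intro k
  induction k using Nat.strong_induction_on with
  | _ k ih =>
    intro hk
    have h1 := recA m hm (k+1) (by omega) (by omega)
    have h2 : ∑ t ∈ Finset.range (k+1), (((k+1).choose t : ℕ) : ℝ) * ((bernoulli' t : ℚ) : ℝ)
        = ((k:ℝ)+1) := by
      have h3 := congrArg (fun q : ℚ => (q : ℝ)) (sum_bernoulli' (k+1))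
      push_cast at h3
      convert h3 using 2
    rw [Finset.sum_range_succ] at h1 h2
    have hsame : ∑ t ∈ Finset.range k, (((k+1).choose t : ℕ) : ℝ) * altA m t
        = ∑ t ∈ Finset.range k, (((k+1).choose t : ℕ) : ℝ) * ((bernoulli' t : ℚ) : ℝ) := by
      apply Finset.sum_congr rfl
      intro t ht
      simp only [Finset.mem_range] at ht
      rw [ih t ht (by omega)]
    have hck : (((k+1).choose k : ℕ) : ℝ) = (k:ℝ)+1 := by
      rw [Nat.choose_succ_self_right]; push_cast; ring
    rw [hck] at h1 h2
    have hk0 : ((k:ℝ)+1) ≠ 0 := by positivity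
    apply mul_left_cancel₀ hk0
    push_cast at h1
    nlinarith [h1, h2, hsame]

lemma polyIter (P : Polynomial ℝ) (k : ℕ) :
    iteratedDeriv k (fun x : ℝ => P.eval x) = fun x => (Polynomial.derivative^[k] P).eval x := by
  induction k with
  | zero => simp [iteratedDeriv_zero]
  | succ k ih =>
    rw [iteratedDeriv_succ, ih]
    funext x
    rw [Function.iterate_succ_apply']
    exact Polynomial.deriv (p := Polynomial.derivative^[k] P)

lemma evalTaylor (P : Polynomial ℝ) (N : ℕ) (hN : P.natDegree < N) (x c : ℝ) :
    P.eval (x + c) = ∑ k ∈ Finset.range N,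
      (Polynomial.derivative^[k] P).eval x / (k.factorial : ℝ) * c ^ k := by
  have h1 : P.eval (x + c) = (Polynomial.taylor x P).eval c := by
    rw [Polynomial.taylor_eval, add_comm]
  have hdeg : (Polynomial.taylor x P).natDegree < N := by
    rwa [Polynomial.natDegree_taylor]
  rw [h1, Polynomial.eval_eq_sum_range' hdeg]
  apply Finset.sum_congr rfl
  intro k _
  rw [Polynomial.taylor_coeff]
  have h2 : Polynomial.derivative^[k] P = k.factorial • Polynomial.hasseDeriv k P := by
    rw [← Polynomial.factorial_smul_hasseDeriv]
    rfl
  have hk0 : (k.factorial : ℝ) ≠ 0 := by exact_mod_cast k.factorial_ne_zero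
  rw [h2, nsmul_eq_mul, Polynomial.eval_mul, Polynomial.eval_natCast]
  field_simp


/-- For a polynomial `P` of degree at most `2m−1`, the Alt and Euler–Maclaurin centering
terms coincide: `G_{m,P}(n) = G^EM_{m,P}(n)` for every nonnegative integer `n`. -/
theorem alt_eq_em_on_polynomials (m : ℕ) (hm : 1 ≤ m) (P : Polynomial ℝ)
    (hP : P.natDegree ≤ 2 * m - 1) (n : ℕ) :
    ∑ j ∈ Finset.Icc 1 m, altGamma m j *
        ∑ i ∈ Finset.range j, P.eval ((n : ℝ) - 1 + (j : ℝ) / 2 - (i : ℝ)) =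
      P.eval ((n : ℝ) - 1) + deriv (fun x : ℝ => P.eval x) ((n : ℝ) - 1) / 2 +
        ∑ j ∈ Finset.Icc 1 (m - 1),
          ((bernoulli (2 * j) : ℚ) : ℝ) / ((2 * j).factorial : ℝ) *
            iteratedDeriv (2 * j) (fun x : ℝ => P.eval x) ((n : ℝ) - 1) := by
  set x : ℝ := (n : ℝ) - 1 with hx
  have hdeg : P.natDegree < 2 * m := by omega
  set D : ℕ → ℝ := fun k => (Polynomial.derivative^[k] P).eval x with hD
  -- Step 1: LHS = ∑_{k < 2m} D k / k! * altA m k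
  have key : ∑ j ∈ Finset.Icc 1 m, altGamma m j *
        ∑ i ∈ Finset.range j, P.eval ((n : ℝ) - 1 + (j : ℝ) / 2 - (i : ℝ))
      = ∑ k ∈ Finset.range (2*m), D k / (k.factorial : ℝ) * altA m k := by
    simp only [altA]
    have h1 : ∀ j ∈ Finset.Icc 1 m, altGamma m j *
          ∑ i ∈ Finset.range j, P.eval ((n : ℝ) - 1 + (j : ℝ) / 2 - (i : ℝ))
        = ∑ k ∈ Finset.range (2*m), ∑ i ∈ Finset.range j,
            altGamma m j * (D k / (k.factorial : ℝ) * ((j:ℝ)/2 - (i:ℝ))^k) := by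
      intro j _
      rw [Finset.mul_sum]
      have h2 : ∀ i ∈ Finset.range j, altGamma m j * P.eval ((n : ℝ) - 1 + (j : ℝ) / 2 - (i : ℝ))
          = ∑ k ∈ Finset.range (2*m), altGamma m j *
              (D k / (k.factorial : ℝ) * ((j:ℝ)/2 - (i:ℝ))^k) := by
        intro i _
        have harg : (n : ℝ) - 1 + (j : ℝ) / 2 - (i : ℝ) = x + ((j:ℝ)/2 - (i:ℝ)) := by
          rw [hx]; ring
        rw [harg, evalTaylor P (2*m) hdeg x _, Finset.mul_sum]
      rw [Finset.sum_congr rfl h2, Finset.sum_comm]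
    rw [Finset.sum_congr rfl h1, Finset.sum_comm]
    apply Finset.sum_congr rfl
    intro k _
    rw [Finset.mul_sum]
    apply Finset.sum_congr rfl
    intro j _
    rw [Finset.mul_sum, Finset.mul_sum]
    apply Finset.sum_congr rfl
    intro i _
    ring
  rw [key]
  -- Step 2: substitute altA = bernoulli'
  have key2 : ∑ k ∈ Finset.range (2*m), D k / (k.factorial : ℝ) * altA m k
      = ∑ k ∈ Finset.range (2*m), D k / (k.factorial : ℝ) * ((bernoulli' k : ℚ) : ℝ) := by
    apply Finset.sum_congr rfl
    intro k hk
    simp only [Finset.mem_range] at hk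
    rw [starA m hm k hk]
  rw [key2]
  -- Step 3: split off k = 0 and k = 1
  set f : ℕ → ℝ := fun k => D k / (k.factorial : ℝ) * ((bernoulli' k : ℚ) : ℝ) with hf
  have hsplit : ∑ k ∈ Finset.range (2*m), f k
      = f 0 + f 1 + ∑ k ∈ Finset.Ico 2 (2*m), f k := by
    rw [Finset.range_eq_Ico, Finset.sum_eq_sum_Ico_succ_bot (by omega : 0 < 2*m) f,
      Finset.sum_eq_sum_Ico_succ_bot (by omega : 1 < 2*m) f]
    ring
  rw [hsplit]
  have hf0 : f 0 = P.eval x := by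
    simp only [hf, hD, bernoulli'_zero, Nat.factorial_zero, Function.iterate_zero_apply]
    norm_num
  have hf1 : f 1 = deriv (fun x : ℝ => P.eval x) x / 2 := by
    have hder : deriv (fun x : ℝ => P.eval x) x = (Polynomial.derivative P).eval x :=
      Polynomial.deriv (p := P)
    simp only [hf, hD, bernoulli'_one, Nat.factorial_one, Function.iterate_one, hder]
    push_cast
    ring
  -- Step 4: the tail equals the Bernoulli sum
  have htail : ∑ k ∈ Finset.Ico 2 (2*m), f k
      = ∑ j ∈ Finset.Icc 1 (m-1),
          ((bernoulli (2 * j) : ℚ) : ℝ) / ((2 * j).factorial : ℝ) *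
            iteratedDeriv (2 * j) (fun x : ℝ => P.eval x) x := by
    have hinj : Set.InjOn (fun j : ℕ => 2*j) (Finset.Icc 1 (m-1)) := by
      intro a _ b _ h
      have h2 : 2*a = 2*b := h
      omega
    have hsub : (Finset.Icc 1 (m-1)).image (fun j : ℕ => 2*j) ⊆ Finset.Ico 2 (2*m) := by
      intro k hk
      simp only [Finset.mem_image, Finset.mem_Icc] at hk
      obtain ⟨j, ⟨hj1, hj2⟩, rfl⟩ := hk
      simp only [Finset.mem_Ico]
      omega
    have hzero : ∀ k ∈ Finset.Ico 2 (2*m),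
        k ∉ (Finset.Icc 1 (m-1)).image (fun j : ℕ => 2*j) → f k = 0 := by
      intro k hk hnk
      simp only [Finset.mem_Ico] at hk
      have hodd : Odd k := by
        rcases Nat.even_or_odd k with he | ho
        · exfalso
          obtain ⟨j0, hj0⟩ := he
          obtain ⟨j, rfl⟩ : ∃ j, k = 2*j := ⟨j0, by omega⟩
          exact hnk (Finset.mem_image.2 ⟨j, Finset.mem_Icc.2 (by omega), rfl⟩)
        · exact ho
      simp only [hf, bernoulli'_eq_zero_of_odd hodd (by omega : 1 < k)]
      norm_num
    rw [← Finset.sum_subset hsub hzero, Finset.sum_image (fun a ha b hb h => hinj ha hb h)]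
    apply Finset.sum_congr rfl
    intro j hj
    simp only [Finset.mem_Icc] at hj
    have hne1 : 2*j ≠ 1 := by omega
    rw [polyIter P (2*j)]
    simp only [hf, hD, bernoulli_eq_bernoulli'_of_ne_one hne1]
    ring
  rw [hf0, hf1, htail]
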